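/- Let A ⊆ ℕ be an infinite computably enumerable set, let φ be the standard Gödel numbering, and let θ be a φ-standard numbering of S_A, i.e. a numbering of S_A for which there is a total computable d : ℕ → ℕ with θ i = φ (d i) for all i, and such that θ i = φ i whenever φ i ∈ S_A. Then θ satisfies both (QGN I) and (QGN II); in particular, every φ-standard numbering of S_A is a quasi-Gödel numbering of S_A. -/

import Mathlib

set_option maxHeartbeats 4000000

open Nat.Partrec (Code)
open Nat.Partrec.Code


/-- `r : ℕ →. ℕ` is an initial-segment function for `A`: its domain is empty or
equals `{m | m < a}` for some `a ∈ A`. -/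
def IsInitSeg (A : Set ℕ) (r : ℕ →. ℕ) : Prop :=
  {x : ℕ | (r x).Dom} = (∅ : Set ℕ) ∨ ∃ a ∈ A, {x : ℕ | (r x).Dom} = {m : ℕ | m < a}

/-- `SA A` is the class of unary partial functions that are either total computable
or initial-segment functions for `A`. -/
def SA (A : Set ℕ) : Set (ℕ →. ℕ) :=
  {r | (∃ f : ℕ → ℕ, Computable f ∧ ∀ x, r x = Part.some (f x)) ∨ IsInitSeg A r}

/-- The extended graph of a unary partial function. -/
def graphE (q : ℕ →. ℕ) : Set ℕ :=
  {n | ∃ y, n = Nat.pair y 0} ∪ {n | ∃ x z, q x = Part.some z ∧ n = Nat.pair x (z + 1)}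

/-- The graph of a unary partial function. -/
def pgraph (q : ℕ →. ℕ) : Set ℕ :=
  {n | ∃ x z, q x = Part.some z ∧ n = Nat.pair x z}

/-- Condition (QGN I): the extended graph of the universal function of `θ` is
enumerated by a total computable function. -/
def QGN1 (θ : ℕ → ℕ →. ℕ) : Prop :=
  ∃ h : ℕ → ℕ, Computable h ∧
    Set.range h = {n | ∃ w, n = Nat.pair w 0} ∪
      {n | ∃ i x z, θ i x = Part.some z ∧ n = Nat.pair (Nat.pair i x) (z + 1)}

/-- Condition (QGN II). -/
def QGN2 (A : Set ℕ) (θ : ℕ → ℕ →. ℕ) : Prop :=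
  ∀ k : ℕ → ℕ → ℕ, Computable₂ k →
    ∃ v : ℕ → ℕ, Computable v ∧
      ∀ i, ∀ r ∈ SA A, Set.range (k i) = graphE r → θ (v i) = r

/-- A quasi-Gödel numbering of `SA A`. -/
def QuasiGodel (A : Set ℕ) (θ : ℕ → ℕ →. ℕ) : Prop :=
  Set.range θ = SA A ∧ QGN1 θ ∧ QGN2 A θ

/-- A set of naturals is computably enumerable. -/
def CEset (C : Set ℕ) : Prop :=
  C = ∅ ∨ ∃ g : ℕ → ℕ, Computable g ∧ C = Set.range g

/-- The standard Gödel numbering of the unary partial recursive functions. -/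
def phi (i : ℕ) : ℕ →. ℕ :=
  Nat.Partrec.Code.eval (Denumerable.ofNat Nat.Partrec.Code i)

/-- Every φ-standard numbering of `SA A` is a quasi-Gödel numbering:
it satisfies both (QGN I) and (QGN II). -/
theorem phi_standard_is_quasiGodel (A : Set ℕ) (hAinf : A.Infinite) (hAce : CEset A)
    (θ : ℕ → ℕ →. ℕ) (hrange : Set.range θ = SA A)
    (hstd : ∃ d : ℕ → ℕ, Computable d ∧ ∀ i, θ i = phi (d i))
    (hfix : ∀ i, phi i ∈ SA A → θ i = phi i) :
    QGN1 θ ∧ QGN2 A θ := by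
  obtain ⟨d, hd, hθd⟩ := hstd
  constructor
  · -- QGN1
      refine ⟨fun n =>
        Option.casesOn
          (evaln n.unpair.1.unpair.1 (Denumerable.ofNat Code (d n.unpair.1.unpair.2.unpair.1))
            n.unpair.1.unpair.2.unpair.2)
          (Nat.pair n.unpair.2 0)
          (fun z => Nat.pair (Nat.pair n.unpair.1.unpair.2.unpair.1 n.unpair.1.unpair.2.unpair.2)
            (z + 1)), ?_, ?_⟩
      · have hu1 : Computable fun n : ℕ => n.unpair.1 := (Primrec.fst.comp Primrec.unpair).to_comp
        have hu2 : Computable fun n : ℕ => n.unpair.2 := (Primrec.snd.comp Primrec.unpair).to_comp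
        have ht : Computable fun n : ℕ => n.unpair.1.unpair.1 := hu1.comp hu1
        have hj : Computable fun n : ℕ => n.unpair.1.unpair.2.unpair.1 := hu1.comp (hu2.comp hu1)
        have hx : Computable fun n : ℕ => n.unpair.1.unpair.2.unpair.2 := hu2.comp (hu2.comp hu1)
        have hcode : Computable fun n : ℕ =>
            Denumerable.ofNat Code (d n.unpair.1.unpair.2.unpair.1) :=
          (Primrec.ofNat Code).to_comp.comp (hd.comp hj)
        have ho : Computable fun n : ℕ =>
            evaln n.unpair.1.unpair.1 (Denumerable.ofNat Code (d n.unpair.1.unpair.2.unpair.1))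
              n.unpair.1.unpair.2.unpair.2 :=
          primrec_evaln.to_comp.comp ((ht.pair hcode).pair hx)
        have hnone : Computable fun n : ℕ => Nat.pair n.unpair.2 0 :=
          Primrec₂.natPair.to_comp.comp hu2 (Computable.const 0)
        have hsome : Computable₂ fun (n z : ℕ) =>
            Nat.pair (Nat.pair n.unpair.1.unpair.2.unpair.1 n.unpair.1.unpair.2.unpair.2) (z + 1) :=
          Primrec₂.natPair.to_comp.comp
            (Primrec₂.natPair.to_comp.comp (hj.comp Computable.fst) (hx.comp Computable.fst))
            (Computable.succ.comp Computable.snd)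
        exact Computable.option_casesOn ho hnone hsome
      · ext n
        constructor
        · rintro ⟨m, rfl⟩
          rcases heq : evaln m.unpair.1.unpair.1
              (Denumerable.ofNat Code (d m.unpair.1.unpair.2.unpair.1))
              m.unpair.1.unpair.2.unpair.2 with _ | z
          · simp only [heq]; exact Or.inl ⟨m.unpair.2, rfl⟩
          · simp only [heq]
            refine Or.inr ⟨m.unpair.1.unpair.2.unpair.1, m.unpair.1.unpair.2.unpair.2, z, ?_, rfl⟩
            have hz : z ∈ phi (d m.unpair.1.unpair.2.unpair.1) m.unpair.1.unpair.2.unpair.2 :=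
              evaln_sound (Option.mem_def.mpr heq)
            rw [hθd]
            exact Part.eq_some_iff.mpr hz
        · rintro (⟨w, rfl⟩ | ⟨j, x, z, hz, rfl⟩)
          · refine ⟨Nat.pair 0 w, ?_⟩
            simp [evaln]
          · have hz' : z ∈ phi (d j) x := by
              rw [← hθd j, hz]; exact Part.mem_some z
            obtain ⟨t, ht⟩ := evaln_complete.1 hz'
            refine ⟨Nat.pair (Nat.pair t (Nat.pair j x)) 0, ?_⟩
            simp only [Nat.unpair_pair, Option.mem_def.mp ht]
  · -- QGN2
    intro k hk
    -- the searching partial function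
    set F : ℕ →. ℕ := fun n =>
      (Nat.rfind fun m => Part.some
        (decide ((k n.unpair.1 m).unpair.2 ≠ 0 ∧ (k n.unpair.1 m).unpair.1 = n.unpair.2))).map
        fun m => (k n.unpair.1 m).unpair.2 - 1 with hF_def
    have hkc : Computable₂ fun n m : ℕ => k n.unpair.1 m :=
      hk.comp ((Primrec.fst.comp Primrec.unpair).to_comp.comp Computable.fst) Computable.snd
    have hg : Primrec fun p : ℕ × ℕ => decide (p.1.unpair.2 ≠ 0 ∧ p.1.unpair.1 = p.2) := by
      have h1 : PrimrecPred fun p : ℕ × ℕ => p.1.unpair.2 ≠ 0 :=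
        PrimrecPred.not (Primrec.eq.comp ((Primrec.snd.comp Primrec.unpair).comp Primrec.fst)
          (Primrec.const 0))
      have h2 : PrimrecPred fun p : ℕ × ℕ => p.1.unpair.1 = p.2 :=
        Primrec.eq.comp ((Primrec.fst.comp Primrec.unpair).comp Primrec.fst) Primrec.snd
      exact (h1.and h2).decide
    have hbool : Computable₂ fun n m : ℕ =>
        decide ((k n.unpair.1 m).unpair.2 ≠ 0 ∧ (k n.unpair.1 m).unpair.1 = n.unpair.2) :=
      hg.to_comp.comp (Computable.pair hkc
        (((Primrec.snd.comp Primrec.unpair).comp Primrec.fst).to_comp))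
    have hsub : Computable₂ fun n m : ℕ => (k n.unpair.1 m).unpair.2 - 1 :=
      (Primrec.pred.comp (Primrec.snd.comp Primrec.unpair)).to_comp.comp hkc
    have hF : Partrec F := Partrec.map (Partrec.rfind hbool.partrec₂) hsub
    obtain ⟨c, hc⟩ := exists_code.1 (Partrec.nat_iff.1 hF)
    obtain ⟨s, hs, hse⟩ := Nat.Partrec.Code.smn
    refine ⟨fun i => Encodable.encode (s c i), Computable.encode.comp
      (hs.comp (Computable.const c) Computable.id), ?_⟩
    intro i r hr hgr
    have key : ∀ x, F (Nat.pair i x) = r x := by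
      intro x
      have hiff : ∀ m : ℕ, (true ∈ (fun m => Part.some
          (decide ((k i m).unpair.2 ≠ 0 ∧ (k i m).unpair.1 = x))) m) ↔
          ((k i m).unpair.2 ≠ 0 ∧ (k i m).unpair.1 = x) := by
        intro m
        rw [Part.mem_some_iff]
        exact ⟨fun h => of_decide_eq_true h.symm, fun h => (decide_eq_true h).symm⟩
      -- from a witness of the predicate, recover a value of r x
      have hwit : ∀ m : ℕ, (k i m).unpair.2 ≠ 0 → (k i m).unpair.1 = x →
          r x = Part.some ((k i m).unpair.2 - 1) := by
        intro m h2 h1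
        have hmem : k i m ∈ graphE r := hgr ▸ Set.mem_range_self m
        rcases hmem with ⟨y, hy⟩ | ⟨x', z', hz', he⟩
        · exfalso; apply h2; rw [hy, Nat.unpair_pair]
        · have hx' : x' = x := by
            have := congrArg (fun n => n.unpair.1) he; simpa [Nat.unpair_pair, h1] using this.symm
          have hz : (k i m).unpair.2 = z' + 1 := by
            have := congrArg (fun n => n.unpair.2) he; simpa [Nat.unpair_pair] using this
          rw [← hx', hz] ; simpa using hz'
      by_cases hdom : (r x).Dom
      · set z := (r x).get hdom with hz
        have hrx : r x = Part.some z := (Part.some_get hdom).symm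
        have hxz : Nat.pair x (z + 1) ∈ Set.range (k i) := by
          rw [hgr]; exact Or.inr ⟨x, z, hrx, rfl⟩
        obtain ⟨m0, hm0⟩ := hxz
        have hpm0 : (k i m0).unpair.2 ≠ 0 ∧ (k i m0).unpair.1 = x := by
          rw [hm0, Nat.unpair_pair]; exact ⟨Nat.succ_ne_zero z, rfl⟩
        -- rfind is defined
        have hdomF : (Nat.rfind fun m => Part.some
            (decide ((k i m).unpair.2 ≠ 0 ∧ (k i m).unpair.1 = x))).Dom := by
          refine Nat.rfind_dom.mpr ?_
          exact ⟨m0, (hiff m0).mpr hpm0, fun {_} _ => trivial⟩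
        obtain ⟨m, hm⟩ := Part.dom_iff_mem.mp hdomF
        have hpm := (hiff m).mp (Nat.rfind_spec hm)
        have : r x = Part.some ((k i m).unpair.2 - 1) := hwit m hpm.1 hpm.2
        rw [hF_def]
        simp only [Nat.unpair_pair]
        rw [hrx] at this
        have hval : (k i m).unpair.2 - 1 = z := by
          have := Part.some_inj.mp this; exact this.symm
        rw [hrx]
        exact Part.eq_some_iff.mpr (Part.mem_map_iff _ |>.mpr ⟨m, hm, hval⟩)
      · -- r x undefined: rfind never succeeds
        have hnone : ∀ m : ℕ, ¬((k i m).unpair.2 ≠ 0 ∧ (k i m).unpair.1 = x) := by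
          rintro m ⟨h2, h1⟩
          exact hdom (by rw [hwit m h2 h1]; trivial)
        rw [hF_def]
        simp only [Nat.unpair_pair]
        rw [Part.eq_none_iff'.mpr hdom]
        rw [Part.eq_none_iff]
        rintro a ha
        obtain ⟨m, hm, -⟩ := (Part.mem_map_iff _).mp ha
        exact hnone m ((hiff m).mp (Nat.rfind_spec hm))
    have hphi : phi (Encodable.encode (s c i)) = r := by
      funext x
      have h1 : phi (Encodable.encode (s c i)) x = F (Nat.pair i x) := by
        unfold phi
        rw [Denumerable.ofNat_encode, hse, hc]
      rw [h1, key x]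
    show θ (Encodable.encode (s c i)) = r
    rw [hfix _ (by rw [hphi]; exact hr), hphi]
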